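/- Let Y be a symmetric n×n matrix with integer entries. Then Y is positive semidefinite if and only if there exist integer matrices U, V, W and a positive integer k such that Wᵀ(UᵀU + V)W = kY and V is symmetric and diagonally dominant (i.e., for every i, the sum over j ≠ i of |V_{ij}| is at most V_{ii}). -/

import Mathlib

open Matrix BigOperators

lemma mul3 {R : Type*} [CommRing R] {m n : Type*} [Fintype m] [Fintype n]
    (L : Matrix m n R) (D : Matrix m m R) (u v : n) : (Lᵀ * D * L) u v = ∑ p, ∑ q, L p u * (D p q * L q v) := by
  simp_rw [Matrix.mul_apply, Matrix.transpose_apply, Finset.sum_mul, mul_assoc]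
  rw [Finset.sum_comm]

lemma quadform {R : Type*} [CommRing R] {m : Type*} [Fintype m] (B : Matrix m m R) (x : m → R) :
    x ⬝ᵥ B.mulVec x = ∑ i, ∑ j, B i j * x i * x j := by
  simp only [dotProduct, Matrix.mulVec, Finset.mul_sum]
  exact Finset.sum_congr rfl fun i _ => Finset.sum_congr rfl fun j _ => by ring

lemma int_decomp : ∀ (n : ℕ) (A : Matrix (Fin n) (Fin n) ℤ), Aᵀ = A →
    (∀ x : Fin n → ℤ, 0 ≤ x ⬝ᵥ A.mulVec x) →
    ∃ (L D : Matrix (Fin n) (Fin n) ℤ) (k : ℕ), 0 < k ∧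
      (∀ i j, i ≠ j → D i j = 0) ∧ (∀ i, 0 ≤ D i i) ∧ Lᵀ * D * L = (k : ℤ) • A := by
  intro n
  induction n with
  | zero =>
    intro A _ _
    exact ⟨0, 0, 1, one_pos, fun i j _ => rfl, fun i => le_refl 0,
      by ext i j; exact i.elim0⟩
  | succ n ih =>
    intro A hsymm hpsd
    have hAs : ∀ i j, A i j = A j i := fun i j => congrFun (congrFun hsymm j) i
    set a : ℤ := A 0 0 with ha
    have ha0 : 0 ≤ a := by
      have := hpsd (Pi.single 0 1)
      simpa [dotProduct, Matrix.mulVec, Pi.single_apply] using this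
    -- the quadratic form expansion for x = Fin.cons c (b • x̂)
    have hform : ∀ (c : ℤ) (y : Fin n → ℤ),
        (Fin.cons c y : Fin (n+1) → ℤ) ⬝ᵥ A.mulVec (Fin.cons c y)
        = a * c^2 + 2 * c * (∑ j, A 0 j.succ * y j)
          + ∑ i, ∑ j, A i.succ j.succ * y i * y j := by
      intro c y
      have e1 : ∀ i : Fin n, y i * (A i.succ 0 * c) = c * (A 0 i.succ * y i) :=
        fun i => by rw [hAs i.succ 0]; ring
      have e2 : ∀ i : Fin n, ∀ j : Fin n,
          y i * (A i.succ j.succ * y j) = A i.succ j.succ * y i * y j :=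
        fun i j => by ring
      simp only [dotProduct, Matrix.mulVec, Fin.sum_univ_succ, Fin.cons_zero,
        Fin.cons_succ, mul_add, Finset.sum_add_distrib, Finset.mul_sum, e1, e2]
      rw [← Finset.mul_sum]
      ring_nf
      rw [show (c * ∑ x : Fin n, A 0 x.succ * y x) * 2
          = ∑ x : Fin n, c * 2 * A 0 x.succ * y x by
        rw [Finset.mul_sum, Finset.sum_mul]
        exact Finset.sum_congr rfl fun i _ => by ring]
      rw [← ha]; ring
    have hdiag : ∀ i, 0 ≤ A i i := by
      intro i
      have := hpsd (Pi.single i 1)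
      simpa [dotProduct, Matrix.mulVec, Pi.single_apply] using this
    rcases eq_or_lt_of_le ha0 with hz | hpos
    · -- a = 0 : first row and column vanish
      have hrow : ∀ j : Fin n, A 0 j.succ = 0 := by
        intro j
        set c0 : ℤ := A 0 j.succ with hc0
        set d : ℤ := A j.succ j.succ with hd
        by_contra hne
        have h1 : 1 ≤ c0 ^ 2 := by
          have := Int.one_le_abs (by exact_mod_cast hne)
          nlinarith [sq_abs c0]
        have hd0 : 0 ≤ d := hdiag j.succ
        have h2 := hpsd (Fin.cons (-(d + 1) * c0) (Pi.single j 1))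
        rw [hform (-(d + 1) * c0) (Pi.single j 1)] at h2
        rw [← hz] at h2
        simp only [Pi.single_apply, mul_ite, mul_one, mul_zero, Finset.sum_ite_eq',
          Finset.mem_univ, if_true] at h2
        have h3 : ∑ i, ∑ k, A i.succ k.succ * (if i = j then 1 else 0) *
            (if k = j then 1 else 0) = d := by
          simp [Finset.sum_ite_eq', hd]
        nlinarith [h2]
      have hrow0 : ∀ v : Fin (n + 1), A 0 v = 0 := fun v => Fin.cases hz.symm hrow v
      set B : Matrix (Fin n) (Fin n) ℤ := A.submatrix Fin.succ Fin.succ with hB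
      have hBsymm : Bᵀ = B := by
        ext i j; exact hAs j.succ i.succ
      have hBpsd : ∀ x : Fin n → ℤ, 0 ≤ x ⬝ᵥ B.mulVec x := by
        intro x
        have h2 := hpsd (Fin.cons 0 x)
        rw [hform 0 x] at h2
        rw [quadform]
        simpa [hB] using h2
      obtain ⟨L₁, D₁, k₁, hk₁, hDoff, hDdiag, hprod⟩ := ih B hBsymm hBpsd
      refine ⟨Matrix.of (Fin.cons 0 (fun i => Fin.cons 0 (fun j => L₁ i j))),
        Matrix.of (Fin.cons 0 (fun i => Fin.cons 0 (fun j => D₁ i j))), k₁, hk₁, ?_, ?_, ?_⟩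
      · intro i j hij
        induction i using Fin.cases with
        | zero => simp
        | succ i =>
          induction j using Fin.cases with
          | zero => simp
          | succ j =>
            simp only [Matrix.of_apply, Fin.cons_succ]
            exact hDoff i j (fun h => hij (by rw [h]))
      · intro i
        induction i using Fin.cases with
        | zero => simp
        | succ i =>
          simp only [Matrix.of_apply, Fin.cons_succ]
          exact hDdiag i
      · ext u v
        rw [mul3]
        simp only [Matrix.of_apply, Fin.sum_univ_succ, Fin.cons_zero, Fin.cons_succ,
          Pi.zero_apply, zero_mul, mul_zero, zero_add, add_zero, Finset.sum_const_zero]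
        induction u using Fin.cases with
        | zero =>
          simp [hrow0 v]
        | succ u =>
          induction v using Fin.cases with
          | zero =>
            simp [hAs u.succ 0, hrow0]
          | succ v =>
            have := congrFun (congrFun hprod u) v
            rw [mul3] at this
            simpa [hB] using this
    · -- a > 0 : Schur complement
      set s : (Fin n → ℤ) → ℤ := fun x => ∑ j, A 0 j.succ * x j with hs
      set Z : Matrix (Fin n) (Fin n) ℤ :=
        Matrix.of (fun i j => a * A i.succ j.succ - A 0 i.succ * A 0 j.succ) with hZ
      have hZsymm : Zᵀ = Z := by
        ext i j
        simp only [Matrix.transpose_apply, hZ, Matrix.of_apply]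
        rw [hAs j.succ i.succ]; ring
      have hZform : ∀ x : Fin n → ℤ, x ⬝ᵥ Z.mulVec x
          = a * (∑ i, ∑ j, A i.succ j.succ * x i * x j) - s x * s x := by
        intro x
        rw [quadform]
        have e : ∀ i j : Fin n, Z i j * x i * x j
            = a * (A i.succ j.succ * x i * x j) - (A 0 i.succ * x i) * (A 0 j.succ * x j) :=
          fun i j => by simp only [hZ, Matrix.of_apply]; ring
        simp_rw [e, Finset.sum_sub_distrib, ← Finset.mul_sum, ← Finset.sum_mul]
        rfl
      have hZpsd : ∀ x : Fin n → ℤ, 0 ≤ x ⬝ᵥ Z.mulVec x := by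
        intro x
        have h2 := hpsd (Fin.cons (-(s x)) (a • x))
        rw [hform (-(s x)) (a • x)] at h2
        have e1 : ∑ j, A 0 j.succ * (a • x) j = a * s x := by
          rw [hs, Finset.mul_sum]
          exact Finset.sum_congr rfl fun j _ => by simp [mul_comm, mul_left_comm]
        have e2 : ∑ i, ∑ j, A i.succ j.succ * (a • x) i * (a • x) j
            = a * a * ∑ i, ∑ j, A i.succ j.succ * x i * x j := by
          simp_rw [Finset.mul_sum]
          exact Finset.sum_congr rfl fun i _ => Finset.sum_congr rfl fun j _ => by
            simp; ring
        rw [e1, e2] at h2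
        have h3 : 0 ≤ a * (x ⬝ᵥ Z.mulVec x) := by
          rw [hZform]; nlinarith [h2]
        by_contra hneg
        push_neg at hneg
        exact absurd h3 (not_le.mpr (mul_neg_of_pos_of_neg hpos hneg))
      obtain ⟨L₁, D₁, k₁, hk₁, hDoff, hDdiag, hprod⟩ := ih Z hZsymm hZpsd
      refine ⟨Matrix.of (Fin.cons (Fin.cons a (fun j => A 0 j.succ))
          (fun i => Fin.cons 0 (fun j => L₁ i j))),
        Matrix.of (Fin.cons (Fin.cons (k₁ : ℤ) 0)
          (fun i => Fin.cons 0 (fun j => D₁ i j))), k₁ * a.toNat,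
        mul_pos hk₁ (by omega), ?_, ?_, ?_⟩
      · intro i j hij
        induction i using Fin.cases with
        | zero =>
          induction j using Fin.cases with
          | zero => exact absurd rfl hij
          | succ j => simp
        | succ i =>
          induction j using Fin.cases with
          | zero => simp
          | succ j =>
            simp only [Matrix.of_apply, Fin.cons_succ]
            exact hDoff i j (fun h => hij (by rw [h]))
      · intro i
        induction i using Fin.cases with
        | zero => simp [Int.ofNat_nonneg]
        | succ i =>
          simp only [Matrix.of_apply, Fin.cons_succ]
          exact hDdiag i
      · have hta : ((a.toNat : ℤ)) = a := Int.toNat_of_nonneg ha0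
        ext u v
        rw [mul3]
        simp only [Matrix.of_apply, Fin.sum_univ_succ, Fin.cons_zero, Fin.cons_succ,
          Pi.zero_apply, zero_mul, mul_zero, zero_add, add_zero, Finset.sum_const_zero]
        induction u using Fin.cases with
        | zero =>
          induction v using Fin.cases with
          | zero =>
            simp [← ha, hta]; ring
          | succ v =>
            simp [hta]; ring
        | succ u =>
          induction v using Fin.cases with
          | zero =>
            simp [hta, hAs u.succ 0]; ring
          | succ v =>
            have hz1 := congrFun (congrFun hprod u) v
            rw [mul3] at hz1
            simp only [Matrix.smul_apply, smul_eq_mul, hZ, Matrix.of_apply] at hz1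
            simp only [Fin.cons_succ, Matrix.smul_apply, smul_eq_mul]
            push_cast [hta]
            linear_combination hz1

lemma dd_psd {m : Type*} [Fintype m] [DecidableEq m] (V : Matrix m m ℝ)
    (hsym : ∀ i j, V i j = V j i)
    (hdd : ∀ i, ∑ j ∈ Finset.univ.erase i, |V i j| ≤ V i i)
    (y : m → ℝ) : 0 ≤ y ⬝ᵥ V.mulVec y := by
  rw [quadform]
  have key : ∀ i j : m,
      -(|V i j| * (y i * y i) + |V i j| * (y j * y j)) ≤ 2 * (V i j * y i * y j) := by
    intro i j
    have h1 : 0 ≤ (|V i j| + V i j) * (y i + y j) ^ 2 :=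
      mul_nonneg (by linarith [neg_abs_le (V i j)]) (sq_nonneg _)
    have h2 : 0 ≤ (|V i j| - V i j) * (y i - y j) ^ 2 :=
      mul_nonneg (by linarith [le_abs_self (V i j)]) (sq_nonneg _)
    nlinarith [h1, h2]
  set S1 : ℝ := ∑ i, ∑ j ∈ Finset.univ.erase i, |V i j| * (y i * y i) with hS1d
  set S2 : ℝ := ∑ i, ∑ j ∈ Finset.univ.erase i, |V i j| * (y j * y j) with hS2d
  set A' : ℝ := ∑ i, ∑ j ∈ Finset.univ.erase i, V i j * y i * y j with hA'd
  have hS1 : S1 ≤ ∑ i, V i i * (y i * y i) := by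
    apply Finset.sum_le_sum
    intro i _
    rw [← Finset.sum_mul]
    exact mul_le_mul_of_nonneg_right (hdd i) (mul_self_nonneg _)
  have hS2 : S2 ≤ ∑ i, V i i * (y i * y i) := by
    have hswap : S2 = ∑ j, ∑ i ∈ Finset.univ.erase j, |V i j| * (y j * y j) := by
      rw [hS2d]
      simp_rw [Finset.sum_erase_eq_sub (Finset.mem_univ _)]
      rw [Finset.sum_sub_distrib, Finset.sum_sub_distrib, Finset.sum_comm]
    rw [hswap]
    apply Finset.sum_le_sum
    intro j _
    have e : ∑ i ∈ Finset.univ.erase j, |V i j| * (y j * y j)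
        = (∑ i ∈ Finset.univ.erase j, |V j i|) * (y j * y j) := by
      rw [Finset.sum_mul]
      exact Finset.sum_congr rfl fun i _ => by rw [hsym i j]
    rw [e]
    exact mul_le_mul_of_nonneg_right (hdd j) (mul_self_nonneg _)
  have hA : -(S1 + S2) ≤ 2 * A' := by
    have h := Finset.sum_le_sum (s := (Finset.univ : Finset m))
      (fun i (_ : i ∈ Finset.univ) =>
        Finset.sum_le_sum (fun j (_ : j ∈ Finset.univ.erase i) => key i j))
    calc -(S1 + S2)
        = ∑ i, ∑ j ∈ Finset.univ.erase i,
            -(|V i j| * (y i * y i) + |V i j| * (y j * y j)) := by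
          simp [Finset.sum_add_distrib, hS1d, hS2d]
      _ ≤ ∑ i, ∑ j ∈ Finset.univ.erase i, 2 * (V i j * y i * y j) := h
      _ = 2 * A' := by
          rw [hA'd, Finset.mul_sum]
          exact Finset.sum_congr rfl fun i _ => by rw [Finset.mul_sum]
  have heq : ∑ i, ∑ j, V i j * y i * y j = (∑ i, V i i * (y i * y i)) + A' := by
    rw [hA'd, ← Finset.sum_add_distrib]
    apply Finset.sum_congr rfl
    intro i _
    rw [← Finset.add_sum_erase Finset.univ (fun j => V i j * y i * y j) (Finset.mem_univ i)]
    congr 1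
    ring
  rw [heq]
  linarith

/-- a symmetric integer matrix `Y` is positive semidefinite iff it has a
`UVW`-certificate: integer matrices `U`, `V`, `W` and a positive integer `k` with
`Wᵀ(UᵀU + V)W = kY` and `V` symmetric and diagonally dominant. -/
theorem stmt_0 (n : ℕ) (Y : Matrix (Fin n) (Fin n) ℝ)
    (hsymm : Y.IsSymm) (hint : ∀ i j, ∃ z : ℤ, Y i j = (z : ℝ)) :
    Y.PosSemidef ↔
      ∃ (m p : ℕ) (U : Matrix (Fin p) (Fin m) ℝ) (V : Matrix (Fin m) (Fin m) ℝ)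
        (W : Matrix (Fin m) (Fin n) ℝ) (k : ℕ),
        0 < k ∧
        (∀ i j, ∃ z : ℤ, U i j = (z : ℝ)) ∧
        (∀ i j, ∃ z : ℤ, V i j = (z : ℝ)) ∧
        (∀ i j, ∃ z : ℤ, W i j = (z : ℝ)) ∧
        Wᵀ * (Uᵀ * U + V) * W = (k : ℝ) • Y ∧
        V.IsSymm ∧
        (∀ i, ∑ j ∈ Finset.univ.erase i, |V i j| ≤ V i i) := by
  constructor
  · -- forward
    intro hY
    choose Az hAz using hint
    set A : Matrix (Fin n) (Fin n) ℤ := Matrix.of Az with hA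
    have hcast : ∀ i j, ((A i j : ℤ) : ℝ) = Y i j := fun i j => (hAz i j).symm
    have hAsymm : Aᵀ = A := by
      ext i j
      apply Int.cast_injective (α := ℝ)
      show ((A j i : ℤ) : ℝ) = ((A i j : ℤ) : ℝ)
      rw [hcast, hcast]
      exact congrFun (congrFun hsymm i) j
    have hApsd : ∀ x : Fin n → ℤ, 0 ≤ x ⬝ᵥ A.mulVec x := by
      intro x
      have h := hY.dotProduct_mulVec_nonneg (fun i => (x i : ℝ))
      rw [star_trivial] at h
      have e : (((x ⬝ᵥ A.mulVec x : ℤ)) : ℝ)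
          = (fun i => (x i : ℝ)) ⬝ᵥ Y.mulVec (fun i => (x i : ℝ)) := by
        simp only [dotProduct, Matrix.mulVec]
        push_cast
        exact Finset.sum_congr rfl fun i _ => by
          rw [Finset.mul_sum, Finset.mul_sum]
          exact Finset.sum_congr rfl fun j _ => by rw [hcast]
      exact_mod_cast e ▸ h
    obtain ⟨L, D, k, hk, hoff, hdg, hLDL⟩ := int_decomp n A hAsymm hApsd
    refine ⟨n, 0, (0 : Matrix (Fin 0) (Fin n) ℝ),
      D.map (Int.cast : ℤ → ℝ), L.map (Int.cast : ℤ → ℝ), k, hk,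
      fun i j => i.elim0, fun i j => ⟨D i j, rfl⟩, fun i j => ⟨L i j, rfl⟩, ?_, ?_, ?_⟩
    · have h0 : (0 : Matrix (Fin 0) (Fin n) ℝ)ᵀ * (0 : Matrix (Fin 0) (Fin n) ℝ)
          + D.map (Int.cast : ℤ → ℝ) = D.map (Int.cast : ℤ → ℝ) := by
        simp [Matrix.zero_mul]
      rw [h0]
      ext u v
      have hZ := congrFun (congrFun hLDL u) v
      rw [mul3] at hZ
      rw [mul3]
      simp only [Matrix.smul_apply, smul_eq_mul] at hZ ⊢
      simp only [Matrix.map_apply, ← hcast u v]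
      exact_mod_cast hZ
    · ext i j
      simp only [Matrix.transpose_apply, Matrix.map_apply]
      by_cases hij : i = j
      · rw [hij]
      · rw [hoff i j hij, hoff j i (Ne.symm hij)]
    · intro i
      have : ∀ j ∈ Finset.univ.erase i, |(D.map (Int.cast : ℤ → ℝ)) i j| = 0 := by
        intro j hj
        simp [Matrix.map_apply, hoff i j (Ne.symm (Finset.mem_erase.mp hj).1)]
      rw [Finset.sum_congr rfl this]
      simp only [Finset.sum_const_zero, Matrix.map_apply]
      exact_mod_cast hdg i
  · -- backward
    rintro ⟨m, p, U, V, W, k, hk, _, _, _, heq, hVsym, hdd⟩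
    have hVs : ∀ i j, V i j = V j i := fun i j => (congrFun (congrFun hVsym i) j).symm
    refine Matrix.PosSemidef.of_dotProduct_mulVec_nonneg ?_ ?_
    · show Yᴴ = Y
      have : Yᴴ = Yᵀ := by ext i j; simp [Matrix.conjTranspose_apply]
      rw [this]; exact hsymm
    · intro x
      rw [star_trivial]
      have hform : x ⬝ᵥ (Wᵀ * (Uᵀ * U + V) * W).mulVec x
          = (W.mulVec x) ⬝ᵥ (Uᵀ * U + V).mulVec (W.mulVec x) := by
        rw [← Matrix.mulVec_mulVec, ← Matrix.mulVec_mulVec,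
          Matrix.dotProduct_mulVec, Matrix.vecMul_transpose]
      have hU : 0 ≤ (W.mulVec x) ⬝ᵥ (Uᵀ * U).mulVec (W.mulVec x) := by
        have h := (Matrix.posSemidef_conjTranspose_mul_self U).dotProduct_mulVec_nonneg (W.mulVec x)
        rw [star_trivial] at h
        simpa [Matrix.conjTranspose_eq_transpose_of_trivial, Matrix.map_apply] using h
      have hV : 0 ≤ (W.mulVec x) ⬝ᵥ V.mulVec (W.mulVec x) := dd_psd V hVs hdd _
      have hsum : 0 ≤ x ⬝ᵥ (Wᵀ * (Uᵀ * U + V) * W).mulVec x := by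
        rw [hform, Matrix.add_mulVec, dotProduct_add]
        exact add_nonneg hU hV
      rw [heq] at hsum
      have hk' : (0 : ℝ) < k := by exact_mod_cast hk
      rw [Matrix.smul_mulVec, dotProduct_smul, smul_eq_mul] at hsum
      nlinarith [hsum, hk', mul_pos hk' hk']
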